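/- Under the hypotheses of the main theorem, x* is the unique zero of F in the ball B(x*, σ), where σ := sup{t ∈ (0,κ) : f(t) < 0}. -/

import Mathlib

/-- Moore–Penrose inverse of an injective closed-range operator: A† = (A*A)⁻¹ A*. -/
noncomputable def pinv {X Y : Type*} [NormedAddCommGroup X] [InnerProductSpace ℝ X]
    [CompleteSpace X] [NormedAddCommGroup Y] [InnerProductSpace ℝ Y] [CompleteSpace Y]
    (A : X →L[ℝ] Y) : Y →L[ℝ] X :=
  (Ring.inverse ((ContinuousLinearMap.adjoint A).comp A)).comp (ContinuousLinearMap.adjoint A)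

lemma exists_lower_bound {X Y : Type*} [NormedAddCommGroup X] [InnerProductSpace ℝ X]
    [CompleteSpace X] [NormedAddCommGroup Y] [InnerProductSpace ℝ Y] [CompleteSpace Y]
    (A : X →L[ℝ] Y) (hinj : Function.Injective A)
    (hcl : IsClosed (Set.range (A : X → Y))) : ∃ c > (0:ℝ), ∀ x, c * ‖x‖ ≤ ‖A x‖ := by
  have hC : IsClosed ((LinearMap.range (A : X →ₗ[ℝ] Y) : Submodule ℝ Y) : Set Y) := by
    have h2 : ((LinearMap.range (A : X →ₗ[ℝ] Y) : Submodule ℝ Y) : Set Y) = Set.range (A : X → Y) := by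
      ext y; simp [LinearMap.mem_range, Set.mem_range]
    rw [h2]; exact hcl
  haveI : CompleteSpace (LinearMap.range (A : X →ₗ[ℝ] Y)) := hC.completeSpace_coe
  set A' : X →L[ℝ] (LinearMap.range (A : X →ₗ[ℝ] Y)) :=
    A.codRestrict _ (fun x => LinearMap.mem_range_self _ x) with hA'
  have hker : LinearMap.ker (A' : X →ₗ[ℝ] (LinearMap.range (A : X →ₗ[ℝ] Y))) = ⊥ := by
    rw [Submodule.eq_bot_iff]
    intro a ha
    have h3 : A a = 0 := by
      have := (LinearMap.mem_ker).mp ha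
      simpa [hA'] using congrArg Subtype.val this
    exact hinj (by simpa using h3)
  have hrange : LinearMap.range (A' : X →ₗ[ℝ] (LinearMap.range (A : X →ₗ[ℝ] Y))) = ⊤ := by
    rw [Submodule.eq_top_iff']
    rintro ⟨y, x, hx⟩
    exact ⟨x, Subtype.ext hx⟩
  set e := ContinuousLinearEquiv.ofBijective A' hker hrange with he
  have hex : ∀ x, ‖e x‖ = ‖A x‖ := by
    intro x
    have h4 : ((e x : LinearMap.range (A : X →ₗ[ℝ] Y)) : Y) = A x := by
      have h5 : e x = A' x := by
        rw [he, ContinuousLinearEquiv.coeFn_ofBijective]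
      rw [h5]; rfl
    rw [← h4]; rfl
  refine ⟨(‖(e.symm : (LinearMap.range (A : X →ₗ[ℝ] Y)) →L[ℝ] X)‖ + 1)⁻¹, by positivity, fun x => ?_⟩
  rw [inv_mul_le_iff₀ (by positivity)]
  calc ‖x‖ = ‖e.symm (e x)‖ := by rw [e.symm_apply_apply]
    _ ≤ ‖(e.symm : (LinearMap.range (A : X →ₗ[ℝ] Y)) →L[ℝ] X)‖ * ‖e x‖ :=
      (e.symm : (LinearMap.range (A : X →ₗ[ℝ] Y)) →L[ℝ] X).le_opNorm _
    _ ≤ (‖(e.symm : (LinearMap.range (A : X →ₗ[ℝ] Y)) →L[ℝ] X)‖ + 1) * ‖A x‖ := by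
      rw [← hex x]
      have h99 := norm_nonneg (e x)
      nlinarith

lemma pinv_left_inv {X Y : Type*} [NormedAddCommGroup X] [InnerProductSpace ℝ X] [CompleteSpace X]
    [NormedAddCommGroup Y] [InnerProductSpace ℝ Y] [CompleteSpace Y]
    (A : X →L[ℝ] Y) (hinj : Function.Injective A)
    (hcl : IsClosed (Set.range (A : X → Y))) : ∀ v, pinv A (A v) = v := by
  obtain ⟨c, hcpos, hlow⟩ := exists_lower_bound A hinj hcl
  set T : X →L[ℝ] X := (ContinuousLinearMap.adjoint A).comp A with hT
  have hTinner : ∀ x, inner ℝ (T x) x = (‖A x‖:ℝ)^2 := by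
    intro x
    rw [hT]
    simp only [ContinuousLinearMap.comp_apply]
    rw [ContinuousLinearMap.adjoint_inner_left]
    exact real_inner_self_eq_norm_sq _
  have hTlow : ∀ x, c^2 * ‖x‖ ≤ ‖T x‖ := by
    intro x
    rcases eq_or_ne x 0 with rfl | hx
    · simp
    · have hxpos : 0 < ‖x‖ := norm_pos_iff.mpr hx
      have h6 : (c * ‖x‖)^2 ≤ ‖A x‖^2 := by
        have h61 := hlow x
        nlinarith [norm_nonneg (A x), mul_pos hcpos hxpos]
      have h8 : (‖A x‖:ℝ)^2 ≤ ‖T x‖ * ‖x‖ := by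
        rw [← hTinner x]
        exact real_inner_le_norm _ _
      have h63 := h6.trans h8
      rw [mul_pow] at h63
      have h64 : (c^2 * ‖x‖) * ‖x‖ ≤ ‖T x‖ * ‖x‖ := by nlinarith
      exact le_of_mul_le_mul_right h64 hxpos
  have hTinj : LinearMap.ker (T : X →ₗ[ℝ] X) = ⊥ := by
    rw [Submodule.eq_bot_iff]
    intro x hx
    have h9 : T x = 0 := LinearMap.mem_ker.mp hx
    have h91 := hTlow x
    rw [h9, norm_zero] at h91
    have h92 : ‖x‖ ≤ 0 := by nlinarith [pow_pos hcpos 2, norm_nonneg x]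
    simpa using le_antisymm h92 (norm_nonneg x)
  have hTclosed : IsClosed ((LinearMap.range (T : X →ₗ[ℝ] X) : Submodule ℝ X) : Set X) := by
    have hanti : AntilipschitzWith (⟨(c^2)⁻¹, by positivity⟩ : NNReal) T :=
      ContinuousLinearMap.antilipschitz_of_bound T (fun x => by
        show ‖x‖ ≤ (c^2)⁻¹ * ‖T x‖
        calc ‖x‖ = (c^2)⁻¹ * (c^2 * ‖x‖) := by field_simp
          _ ≤ (c^2)⁻¹ * ‖T x‖ := by gcongr; exact hTlow x)
    have h10 : ((LinearMap.range (T : X →ₗ[ℝ] X) : Submodule ℝ X) : Set X) = Set.range (T : X → X) := by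
      ext y; simp
    rw [h10]
    exact hanti.isClosed_range T.uniformContinuous
  have hTdense : (LinearMap.range (T : X →ₗ[ℝ] X))ᗮ = ⊥ := by
    rw [Submodule.eq_bot_iff]
    intro y hy
    have h11 : inner ℝ (T y) y = (0:ℝ) := hy (T y) (LinearMap.mem_range_self _ y)
    rw [hTinner y] at h11
    have h94 : A y = 0 := by
      have := sq_eq_zero_iff.mp h11
      simpa using norm_eq_zero.mp this
    exact hinj (by simpa using h94)
  have hTsurj : LinearMap.range (T : X →ₗ[ℝ] X) = ⊤ := by
    have h12 := (Submodule.topologicalClosure_eq_top_iff (K := LinearMap.range (T : X →ₗ[ℝ] X))).mpr hTdense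
    rwa [IsClosed.submodule_topologicalClosure_eq hTclosed] at h12
  set eT := ContinuousLinearEquiv.ofBijective T hTinj hTsurj with heT
  have hUnit : IsUnit T := by
    refine ⟨⟨T, (eT.symm : X →L[ℝ] X), ?_, ?_⟩, rfl⟩
    · ext x
      simp only [ContinuousLinearMap.mul_apply, ContinuousLinearMap.one_apply]
      have h13 : T (eT.symm x) = eT (eT.symm x) := by
        rw [heT, ContinuousLinearEquiv.coeFn_ofBijective]
      rw [ContinuousLinearEquiv.coe_coe, h13, eT.apply_symm_apply]
    · ext x
      simp only [ContinuousLinearMap.mul_apply, ContinuousLinearMap.one_apply]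
      have h13 : T x = eT x := by
        rw [heT, ContinuousLinearEquiv.coeFn_ofBijective]
      rw [ContinuousLinearEquiv.coe_coe, h13, eT.symm_apply_apply]
  intro v
  have h14 : pinv A (A v) = ((Ring.inverse T).comp T) v := by
    rw [pinv, hT]
    rfl
  rw [h14, ← ContinuousLinearMap.mul_def, Ring.inverse_mul_cancel _ hUnit]
  rfl

theorem stmt12
    {X Y : Type*} [NormedAddCommGroup X] [InnerProductSpace ℝ X] [CompleteSpace X]
    [NormedAddCommGroup Y] [InnerProductSpace ℝ Y] [CompleteSpace Y]
    (Ω : Set X) (hΩ : IsOpen Ω) (F : X → Y) (Fp : X → X →L[ℝ] Y)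
    (hF : ∀ x ∈ Ω, HasFDerivAt F (Fp x) x)
    (hclosed : ∀ x ∈ Ω, IsClosed (Set.range ((Fp x) : X → Y)))
    (xs : X) (hxs : xs ∈ Ω) (hFxs : F xs = 0) (hinj : Function.Injective ((Fp xs) : X → Y))
    (R : ℝ) (hR : 0 < R)
    (β κ : ℝ) (hβ : β = ‖pinv (Fp xs)‖)
    (hκ : κ = sSup {t ∈ Set.Ico 0 R | Metric.ball xs t ⊆ Ω})
    (f fp : ℝ → ℝ)
    (hderiv : ∀ t ∈ Set.Ico (0:ℝ) R, HasDerivWithinAt f (fp t) (Set.Ico 0 R) t)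
    (hcont : ContinuousOn fp (Set.Ico 0 R))
    (hmaj : ∀ τ ∈ Set.Icc (0:ℝ) 1, ∀ x ∈ Metric.ball xs κ,
      β * ‖Fp x - Fp (xs + τ • (x - xs))‖ ≤ fp ‖x - xs‖ - fp (τ * ‖x - xs‖))
    (hf0 : f 0 = 0) (hfp0 : fp 0 = -1) (hmono : StrictMonoOn fp (Set.Ico 0 R))
    (σ : ℝ) (hσ : σ = sSup {t ∈ Set.Ioo 0 κ | f t < 0}) :
    ∀ y ∈ Metric.ball xs σ, F y = 0 → y = xs := by
  intro y hy hFy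
  by_cases hXtriv : Subsingleton X
  · exact Subsingleton.elim y xs
  haveI : Nontrivial X := not_subsingleton_iff_nontrivial.mp hXtriv
  set A := Fp xs with hA
  have hleft := pinv_left_inv A hinj (hclosed xs hxs)
  -- β > 0
  have hβpos : 0 < β := by
    obtain ⟨x0, hx0⟩ := exists_ne (0 : X)
    have hne : pinv A ≠ 0 := by
      intro h0
      have h1 := hleft x0
      rw [h0] at h1
      simp at h1
      exact hx0 h1.symm
    rw [hβ]
    exact norm_pos_iff.mpr hne
  -- κ facts
  set K : Set ℝ := {t ∈ Set.Ico 0 R | Metric.ball xs t ⊆ Ω} with hK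
  have hK0 : (0:ℝ) ∈ K := ⟨⟨le_refl 0, hR⟩, by simp⟩
  have hκR : κ ≤ R := by
    rw [hκ]; exact Real.sSup_le (fun t ht => ht.1.2.le) hR.le
  have hκ0 : 0 ≤ κ := by
    rw [hκ]; exact le_csSup ⟨R, fun t ht => ht.1.2.le⟩ hK0
  have hκball : Metric.ball xs κ ⊆ Ω := by
    intro z hz
    rw [Metric.mem_ball] at hz
    rw [hκ] at hz
    obtain ⟨t, htK, hlt⟩ := exists_lt_of_lt_csSup ⟨0, hK0⟩ hz
    exact htK.2 (Metric.mem_ball.mpr hlt)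
  -- ρ
  set v := y - xs with hv
  set ρ := ‖v‖ with hρ
  rcases eq_or_lt_of_le (norm_nonneg v) with h0 | hρpos0
  · have : v = 0 := by rw [← norm_eq_zero, ← h0]
    rw [hv] at this
    exact sub_eq_zero.mp this
  have hρpos : 0 < ρ := by rw [hρ]; exact hρpos0
  have hρσ : ρ < σ := by
    rw [hρ, hv, ← dist_eq_norm]
    exact Metric.mem_ball.mp hy
  -- S facts
  set S : Set ℝ := {t ∈ Set.Ioo 0 κ | f t < 0} with hS
  have hSne : S.Nonempty := by
    by_contra hemp
    rw [Set.not_nonempty_iff_eq_empty] at hemp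
    have hσ0 : σ = 0 := by rw [hσ, hemp, Real.sSup_empty]
    linarith
  have hσκ : σ ≤ κ := by
    rw [hσ]; exact Real.sSup_le (fun t ht => ht.1.2.le) hκ0
  have hρκ : ρ < κ := lt_of_lt_of_le hρσ hσκ
  have hρR : ρ < R := lt_of_lt_of_le hρκ hκR
  -- f ρ < 0
  have hfρneg : f ρ < 0 := by
    obtain ⟨s, hsS, hρs⟩ := exists_lt_of_lt_csSup hSne (by rw [hσ] at hρσ; exact hρσ)
    obtain ⟨⟨hs0, hsκ⟩, hfs⟩ := hsS
    have hsR : s < R := lt_of_lt_of_le hsκ hκR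
    have hfc : ContinuousOn f (Set.Ico 0 R) := fun t ht => (hderiv t ht).continuousWithinAt
    have hfd : ∀ t ∈ Set.Ioo (0:ℝ) R, HasDerivAt f (fp t) t := fun t ht =>
      (hderiv t ⟨ht.1.le, ht.2⟩).hasDerivAt (Ico_mem_nhds ht.1 ht.2)
    obtain ⟨c1, hc1, hs1⟩ := exists_hasDerivAt_eq_slope f fp hρpos
      (hfc.mono (fun u hu => ⟨hu.1, lt_of_le_of_lt hu.2 hρR⟩))
      (fun u hu => hfd u ⟨hu.1, hu.2.trans hρR⟩)
    obtain ⟨c2, hc2, hs2⟩ := exists_hasDerivAt_eq_slope f fp hρs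
      (hfc.mono (fun u hu => ⟨hρpos.le.trans hu.1, lt_of_le_of_lt hu.2 hsR⟩))
      (fun u hu => hfd u ⟨hρpos.trans hu.1, hu.2.trans hsR⟩)
    have hlt : fp c1 < fp c2 := hmono ⟨hc1.1.le, hc1.2.trans hρR⟩
      ⟨(hρpos.trans hc2.1).le, hc2.2.trans hsR⟩ (hc1.2.trans hc2.1)
    rw [hs1, hs2, hf0, sub_zero] at hlt
    by_contra hge
    push_neg at hge
    have h1 : f s - f ρ < 0 := by linarith
    have h2 : (f s - f ρ)/(s - ρ) < 0 := div_neg_of_neg_of_pos h1 (by linarith)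
    have h3 : 0 ≤ f ρ / (ρ - 0) := div_nonneg hge (by linarith)
    linarith
  -- segment
  set z : ℝ → X := fun t => xs + t • v with hz
  have hznorm : ∀ t : ℝ, 0 ≤ t → ‖z t - xs‖ = t * ρ := by
    intro t ht
    rw [hz]
    simp only [add_sub_cancel_left]
    rw [norm_smul, Real.norm_of_nonneg ht, hρ]
  have hzball : ∀ t ∈ Set.Icc (0:ℝ) 1, z t ∈ Metric.ball xs κ := by
    intro t ht
    rw [Metric.mem_ball, dist_eq_norm, hznorm t ht.1]
    exact lt_of_le_of_lt (mul_le_of_le_one_left hρpos.le ht.2) hρκ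
  have hzΩ : ∀ t ∈ Set.Icc (0:ℝ) 1, z t ∈ Ω := fun t ht => hκball (hzball t ht)
  have hseg : ∀ s t : ℝ, 0 ≤ s → s ≤ t → t ≤ 1 →
      β * ‖Fp (z t) - Fp (z s)‖ ≤ fp (t * ρ) - fp (s * ρ) := by
    intro s t hs hst ht1
    rcases eq_or_lt_of_le (hs.trans hst) with ht0 | ht0
    · have hs0 : s = 0 := le_antisymm (by linarith) hs
      rw [← ht0, hs0]
      simp
    · have hτmem : s / t ∈ Set.Icc (0:ℝ) 1 :=
        ⟨div_nonneg hs ht0.le, (div_le_one ht0).mpr hst⟩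
      have hzt : z t ∈ Metric.ball xs κ := hzball t ⟨(hs.trans hst), ht1⟩
      have key := hmaj (s/t) hτmem (z t) hzt
      have e1 : xs + (s/t) • (z t - xs) = z s := by
        rw [hz]
        simp only [add_sub_cancel_left]
        rw [smul_smul, div_mul_cancel₀ s (ne_of_gt ht0)]
      have e2 : ‖z t - xs‖ = t * ρ := hznorm t (hs.trans hst)
      rw [e1, e2] at key
      have e3 : s / t * (t * ρ) = s * ρ := by field_simp
      rwa [e3] at key
  -- continuity of t ↦ Fp (z t)
  have hφcont : ContinuousOn (fun t : ℝ => fp (t * ρ)) (Set.Icc (0:ℝ) 1) := by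
    apply hcont.comp (continuous_id.mul continuous_const).continuousOn
    intro t ht
    constructor
    · exact mul_nonneg ht.1 hρpos.le
    · exact lt_of_le_of_lt (mul_le_of_le_one_left hρpos.le ht.2) hρR
  have hGcont : ContinuousOn (fun t : ℝ => Fp (z t)) (Set.Icc (0:ℝ) 1) := by
    intro t₀ ht₀
    rw [ContinuousWithinAt, tendsto_iff_norm_sub_tendsto_zero]
    have hbnd : ∀ t ∈ Set.Icc (0:ℝ) 1, ‖Fp (z t) - Fp (z t₀)‖ ≤ |fp (t*ρ) - fp (t₀*ρ)| / β := by
      intro t ht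
      rcases le_total t₀ t with hle | hle
      · have := hseg t₀ t ht₀.1 hle ht.2
        rw [le_div_iff₀ hβpos]
        calc ‖Fp (z t) - Fp (z t₀)‖ * β = β * ‖Fp (z t) - Fp (z t₀)‖ := mul_comm _ _
          _ ≤ fp (t*ρ) - fp (t₀*ρ) := this
          _ ≤ |fp (t*ρ) - fp (t₀*ρ)| := le_abs_self _
      · have := hseg t t₀ ht.1 hle ht₀.2
        rw [le_div_iff₀ hβpos, norm_sub_rev]
        calc ‖Fp (z t₀) - Fp (z t)‖ * β = β * ‖Fp (z t₀) - Fp (z t)‖ := mul_comm _ _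
          _ ≤ fp (t₀*ρ) - fp (t*ρ) := this
          _ ≤ |fp (t*ρ) - fp (t₀*ρ)| := by rw [abs_sub_comm]; exact le_abs_self _
    apply squeeze_zero' (Filter.Eventually.of_forall (fun t => norm_nonneg _))
    · exact (eventually_mem_nhdsWithin).mono (fun t ht => hbnd t ht)
    · have h1 : Filter.Tendsto (fun t => |fp (t*ρ) - fp (t₀*ρ)| / β)
          (nhdsWithin t₀ (Set.Icc (0:ℝ) 1)) (nhds (|fp (t₀*ρ) - fp (t₀*ρ)| / β)) := by
        apply Filter.Tendsto.div_const
        apply Filter.Tendsto.abs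
        exact ((hφcont t₀ ht₀).sub tendsto_const_nhds)
      simpa using h1
  have hg'cont : ContinuousOn (fun t : ℝ => Fp (z t) v) (Set.Icc (0:ℝ) 1) := by
    exact (ContinuousLinearMap.apply ℝ Y v).continuous.comp_continuousOn hGcont
  -- FTC
  have hderivz : ∀ t ∈ Set.uIcc (0:ℝ) 1, HasDerivAt (fun u => F (z u)) (Fp (z t) v) t := by
    intro t ht
    rw [Set.uIcc_of_le (by norm_num : (0:ℝ) ≤ 1)] at ht
    have hFz : HasFDerivAt F (Fp (z t)) (z t) := hF (z t) (hzΩ t ht)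
    have hpath : HasDerivAt z v t := by
      rw [hz]
      have h1 : HasDerivAt (fun u : ℝ => u • v) ((1:ℝ) • v) t := (hasDerivAt_id t).smul_const v
      rw [one_smul] at h1
      exact h1.const_add xs
    exact hFz.comp_hasDerivAt t hpath
  have hint : IntervalIntegrable (fun t => Fp (z t) v) MeasureTheory.volume 0 1 := by
    apply ContinuousOn.intervalIntegrable
    rw [Set.uIcc_of_le (by norm_num : (0:ℝ) ≤ 1)]
    exact hg'cont
  have hz1 : z 1 = y := by rw [hz]; simp [hv]
  have hz00 : z 0 = xs := by rw [hz]; simp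
  have hFTC : ∫ t in (0:ℝ)..1, Fp (z t) v = 0 := by
    rw [intervalIntegral.integral_eq_sub_of_hasDerivAt hderivz hint]
    rw [hz1, hz00, hFy, hFxs, sub_zero]
  have hint2 : IntervalIntegrable (fun t => Fp (z t) v - A v) MeasureTheory.volume 0 1 :=
    hint.sub intervalIntegrable_const
  set w : Y := ∫ t in (0:ℝ)..1, (Fp (z t) v - A v) with hw
  have hAv : A v = -w := by
    rw [hw, intervalIntegral.integral_sub hint intervalIntegrable_const, hFTC,
      intervalIntegral.integral_const]
    simp
  have hvw : ‖v‖ ≤ β * ‖w‖ := by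
    have h1 : v = pinv A (A v) := (hleft v).symm
    rw [hAv] at h1
    calc ‖v‖ = ‖pinv A (-w)‖ := by rw [← h1]
      _ ≤ ‖pinv A‖ * ‖-w‖ := (pinv A).le_opNorm _
      _ = β * ‖w‖ := by rw [norm_neg, hβ]
  -- pointwise bound
  have hptw : ∀ t ∈ Set.Icc (0:ℝ) 1, ‖Fp (z t) v - A v‖ ≤ (ρ * fp (t*ρ) + ρ)/β := by
    intro t ht
    have hb := hseg 0 t le_rfl ht.1 ht.2
    rw [zero_mul, hfp0, hz00, ← hA] at hb
    calc ‖Fp (z t) v - A v‖ = ‖(Fp (z t) - A) v‖ := by rw [ContinuousLinearMap.sub_apply]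
      _ ≤ ‖Fp (z t) - A‖ * ρ := by rw [hρ]; exact (Fp (z t) - A).le_opNorm v
      _ ≤ ((fp (t*ρ) - fp 0)/β) * ρ := by
          apply mul_le_mul_of_nonneg_right _ hρpos.le
          rw [le_div_iff₀ hβpos, mul_comm]
          rw [hfp0]
          exact hb
      _ = (ρ * fp (t*ρ) + ρ)/β := by rw [hfp0]; ring
  -- integrability of bound pieces
  have hbint0 : IntervalIntegrable (fun t => ρ * fp (t*ρ)) MeasureTheory.volume 0 1 := by
    apply ContinuousOn.intervalIntegrable
    rw [Set.uIcc_of_le (by norm_num : (0:ℝ) ≤ 1)]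
    exact continuousOn_const.mul hφcont
  have hbint : IntervalIntegrable (fun t => (ρ * fp (t*ρ) + ρ)/β) MeasureTheory.volume 0 1 :=
    (hbint0.add intervalIntegrable_const).div_const β
  -- FTC for f
  have hFTC2 : ∫ t in (0:ℝ)..1, ρ * fp (t*ρ) = f ρ := by
    have hmaps : ∀ t : ℝ, t ∈ Set.Icc (0:ℝ) 1 → t * ρ ∈ Set.Ico (0:ℝ) R := by
      intro t ht
      exact ⟨mul_nonneg ht.1 hρpos.le,
        lt_of_le_of_lt (mul_le_of_le_one_left hρpos.le ht.2) hρR⟩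
    have hfc2 : ContinuousOn (fun u : ℝ => f (u * ρ)) (Set.Icc (0:ℝ) 1) := by
      apply ContinuousOn.comp (fun t ht => (hderiv t ht).continuousWithinAt)
        (continuous_id.mul continuous_const).continuousOn
      exact fun t ht => hmaps t ht
    have hg : ∀ t ∈ Set.Ioo (0:ℝ) 1, HasDerivWithinAt (fun u : ℝ => f (u * ρ))
        (ρ * fp (t*ρ)) (Set.Ioi t) t := by
      intro t ht
      have hmem : t * ρ ∈ Set.Ico (0:ℝ) R := hmaps t ⟨ht.1.le, ht.2.le⟩
      have hpos : 0 < t * ρ := mul_pos ht.1 hρpos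
      have h1 : HasDerivAt f (fp (t*ρ)) (t*ρ) :=
        (hderiv (t*ρ) hmem).hasDerivAt (Ico_mem_nhds hpos hmem.2)
      have h2 : HasDerivAt (fun u : ℝ => u * ρ) ρ t := by
        simpa using (hasDerivAt_id t).mul_const ρ
      have h3 := HasDerivAt.comp t h1 h2
      rw [mul_comm] at h3
      exact h3.hasDerivWithinAt
    have := intervalIntegral.integral_eq_sub_of_hasDeriv_right_of_le
      (by norm_num : (0:ℝ) ≤ 1) hfc2 hg hbint0
    rw [this]
    norm_num [hf0]
  -- final bound
  have hbound : ‖w‖ ≤ (f ρ + ρ)/β := by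
    calc ‖w‖ ≤ ∫ t in (0:ℝ)..1, ‖Fp (z t) v - A v‖ :=
        intervalIntegral.norm_integral_le_integral_norm (by norm_num)
      _ ≤ ∫ t in (0:ℝ)..1, (ρ * fp (t*ρ) + ρ)/β := by
        apply intervalIntegral.integral_mono_on (by norm_num) hint2.norm hbint
        exact fun t ht => hptw t ht
      _ = (f ρ + ρ)/β := by
        rw [intervalIntegral.integral_div,
          intervalIntegral.integral_add hbint0 intervalIntegrable_const, hFTC2,
          intervalIntegral.integral_const]
        norm_num
  have hfinal : ρ ≤ f ρ + ρ := by
    calc ρ = ‖v‖ := hρ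
      _ ≤ β * ‖w‖ := hvw
      _ ≤ β * ((f ρ + ρ)/β) := by
        apply mul_le_mul_of_nonneg_left hbound hβpos.le
      _ = f ρ + ρ := by field_simp
  linarith
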